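/- Let V_A and V_B be finite-dimensional complex vector spaces, let v ∈ V_A ⊗ V_B, let M_A be a linear operator on V_A, and let λ ∈ ℂ. If (M_A ⊗ Id_B) v = λ v, then (M_A ⊗ Id_B) v' = λ v' for every v' ∈ Σ_A(v) ⊗ V_B; equivalently, M_A w = λ w for every w in the Schmidt span Σ_A(v). -/

import Mathlib

open TensorProduct

/-- The Schmidt span of `v ∈ V_A ⊗ V_B`: the smallest subspace `W` of `V_A` such that
`v ∈ W ⊗ V_B` (viewed inside `V_A ⊗ V_B` via the inclusion `W ⊗ V_B → V_A ⊗ V_B`). -/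
noncomputable def schmidtSpan {VA VB : Type*} [AddCommGroup VA] [Module ℂ VA]
    [AddCommGroup VB] [Module ℂ VB] (v : VA ⊗[ℂ] VB) : Submodule ℂ VA :=
  sInf {W : Submodule ℂ VA |
    v ∈ LinearMap.range (TensorProduct.map W.subtype (LinearMap.id : VB →ₗ[ℂ] VB))}

/-- Contraction against a functional on the second factor. -/
noncomputable def contrRight {VA VB : Type*} [AddCommGroup VA] [Module ℂ VA]
    [AddCommGroup VB] [Module ℂ VB] (f : VB →ₗ[ℂ] ℂ) : (VA ⊗[ℂ] VB) →ₗ[ℂ] VA :=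
  (TensorProduct.rid ℂ VA).toLinearMap ∘ₗ TensorProduct.map LinearMap.id f

lemma contrRight_tmul {VA VB : Type*} [AddCommGroup VA] [Module ℂ VA]
    [AddCommGroup VB] [Module ℂ VB] (f : VB →ₗ[ℂ] ℂ) (x : VA) (y : VB) :
    contrRight f (x ⊗ₜ[ℂ] y) = f y • x := by
  simp [contrRight]

/-- If `(M_A ⊗ Id) v = λ • v`, then `M_A w = λ • w` for every `w` in the Schmidt span
`Σ_A(v)`; equivalently, `(M_A ⊗ Id) v' = λ • v'` for every `v' ∈ Σ_A(v) ⊗ V_B`. -/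
theorem schmidtSpan_eigenvector {VA VB : Type*}
    [AddCommGroup VA] [Module ℂ VA] [FiniteDimensional ℂ VA]
    [AddCommGroup VB] [Module ℂ VB] [FiniteDimensional ℂ VB]
    (v : VA ⊗[ℂ] VB) (MA : VA →ₗ[ℂ] VA) (lam : ℂ)
    (hv : TensorProduct.map MA (LinearMap.id : VB →ₗ[ℂ] VB) v = lam • v) :
    (∀ w ∈ schmidtSpan v, MA w = lam • w) ∧
    (∀ v' ∈ LinearMap.range
        (TensorProduct.map (schmidtSpan v).subtype (LinearMap.id : VB →ₗ[ℂ] VB)),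
      TensorProduct.map MA (LinearMap.id : VB →ₗ[ℂ] VB) v' = lam • v') := by
  classical
  obtain ⟨n, b⟩ : ∃ n, Nonempty (Module.Basis (Fin n) ℂ VB) :=
    ⟨Module.finrank ℂ VB, ⟨Module.finBasis ℂ VB⟩⟩
  obtain ⟨b⟩ := b
  -- every element of VA ⊗ VB decomposes along the basis b
  have key : ∀ u : VA ⊗[ℂ] VB,
      u = ∑ i, (contrRight (b.coord i) u) ⊗ₜ[ℂ] b i := by
    intro u
    induction u using TensorProduct.induction_on with
    | zero => simp
    | tmul x y =>
        have h1 : ∀ i, contrRight (b.coord i) (x ⊗ₜ[ℂ] y) = b.repr y i • x := by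
          intro i; simp [contrRight_tmul]
        calc x ⊗ₜ[ℂ] y = x ⊗ₜ[ℂ] (∑ i, b.repr y i • b i) := by rw [b.sum_repr y]
          _ = ∑ i, x ⊗ₜ[ℂ] (b.repr y i • b i) := by rw [tmul_sum]
          _ = ∑ i, (contrRight (b.coord i) (x ⊗ₜ[ℂ] y)) ⊗ₜ[ℂ] b i := by
              refine Finset.sum_congr rfl fun i _ => ?_
              rw [h1 i, smul_tmul]
    | add u w hu hw =>
        conv_lhs => rw [hu, hw]
        rw [← Finset.sum_add_distrib]
        refine Finset.sum_congr rfl fun i _ => ?_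
        rw [map_add, add_tmul]
  -- the span of contractions of v
  set S : Submodule ℂ VA :=
    Submodule.span ℂ (Set.range fun f : VB →ₗ[ℂ] ℂ => contrRight f v) with hS
  -- v lies in S ⊗ VB
  have hvS : v ∈ LinearMap.range
      (TensorProduct.map S.subtype (LinearMap.id : VB →ₗ[ℂ] VB)) := by
    rw [key v]
    refine Submodule.sum_mem _ fun i _ => ?_
    have hmem : contrRight (b.coord i) v ∈ S :=
      Submodule.subset_span ⟨b.coord i, rfl⟩
    exact ⟨(⟨contrRight (b.coord i) v, hmem⟩ : S) ⊗ₜ[ℂ] b i, rfl⟩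
  have hle : schmidtSpan v ≤ S := sInf_le hvS
  -- contractions of v are eigenvectors
  have heig : ∀ f : VB →ₗ[ℂ] ℂ, MA (contrRight f v) = lam • contrRight f v := by
    intro f
    have hcomm : ∀ u : VA ⊗[ℂ] VB,
        contrRight f (TensorProduct.map MA (LinearMap.id : VB →ₗ[ℂ] VB) u)
          = MA (contrRight f u) := by
      intro u
      induction u using TensorProduct.induction_on with
      | zero => simp
      | tmul x y => simp [contrRight_tmul, map_tmul]
      | add u w hu hw => simp [map_add, hu, hw]
    have := hcomm v
    rw [hv, map_smul] at this
    rw [← this]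
  have part1S : ∀ w ∈ S, MA w = lam • w := by
    intro w hw
    induction hw using Submodule.span_induction with
    | mem x hx => obtain ⟨f, rfl⟩ := hx; exact heig f
    | zero => simp
    | add x y _ _ hx hy => rw [map_add, hx, hy, smul_add]
    | smul c x _ hx => rw [map_smul, hx, smul_comm]
  have part1 : ∀ w ∈ schmidtSpan v, MA w = lam • w := fun w hw => part1S w (hle hw)
  refine ⟨part1, ?_⟩
  rintro v' ⟨u, rfl⟩
  induction u using TensorProduct.induction_on with
  | zero => simp
  | tmul x y =>
      simp only [map_tmul, Submodule.coe_subtype, LinearMap.id_coe, id_eq]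
      rw [part1 x x.2, smul_tmul']
  | add u w hu hw => rw [map_add, map_add, hu, hw, smul_add]
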